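/- Assume V₀ < d₀²/4, let X be the unique solution of X = V(A + X) with ‖X‖ ≤ r_min, and set H₁ = A + X. Then for every z ∈ ℂ ∖ Γ the continued transfer function factorizes as M(z) = W(z) ∘ (H₁ − z), where W(z) = I − ∫₀¹ γ'(t) (γ(t) − z)⁻¹ · K(γ(t)) ∘ (H₁ − γ(t))⁻¹ dt is a bounded operator on H. -/

import Mathlib

open MeasureTheory Metric Set

noncomputable section

variable {H : Type*} [NormedAddCommGroup H] [InnerProductSpace ℂ H] [CompleteSpace H]

/-- `d₀ = inf_{t ∈ [0,1]} dist (γ t, σ(A))`. -/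
noncomputable def curveDist (A : H →L[ℂ] H) (γ : ℝ → ℂ) : ℝ :=
  ⨅ t : Set.Icc (0 : ℝ) 1, Metric.infDist (γ t) (spectrum ℂ A)

/-- `V₀ = ∫₀¹ |γ'(t)| ‖K(γ(t))‖ dt`. -/
noncomputable def curveVar (K : ℂ → H →L[ℂ] H) (γ : ℝ → ℂ) : ℝ :=
  ∫ t in (0:ℝ)..1, ‖derivWithin γ (Set.Icc 0 1) t‖ * ‖K (γ t)‖

/-- `V(Y) = ∫₀¹ γ'(t) • K(γ(t)) ∘ (Y − γ(t))⁻¹ dt` (Bochner integral in `B(H)`). -/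
noncomputable def Vmap (K : ℂ → H →L[ℂ] H) (γ : ℝ → ℂ) (Y : H →L[ℂ] H) : H →L[ℂ] H :=
  ∫ t in (0:ℝ)..1, derivWithin γ (Set.Icc 0 1) t •
    (K (γ t) ∘L Ring.inverse (Y - γ t • (1 : H →L[ℂ] H)))

/-- `r_min = d₀/2 − √(d₀²/4 − V₀)`. -/
noncomputable def rMin (A : H →L[ℂ] H) (K : ℂ → H →L[ℂ] H) (γ : ℝ → ℂ) : ℝ :=
  curveDist A γ / 2 - Real.sqrt ((curveDist A γ) ^ 2 / 4 - curveVar K γ)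

/-- `V₁(z) = ∫₀¹ γ'(t) (z − γ(t))⁻¹ • K(γ(t)) dt`. -/
noncomputable def V1 (K : ℂ → H →L[ℂ] H) (γ : ℝ → ℂ) (z : ℂ) : H →L[ℂ] H :=
  ∫ t in (0:ℝ)..1, (derivWithin γ (Set.Icc 0 1) t * (z - γ t)⁻¹) • K (γ t)

/-- The continued transfer function `M(z) = A − z + V₁(z)`. -/
noncomputable def Mfun (A : H →L[ℂ] H) (K : ℂ → H →L[ℂ] H) (γ : ℝ → ℂ) (z : ℂ) :
    H →L[ℂ] H :=
  A - z • (1 : H →L[ℂ] H) + V1 K γ z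

/-- `W(z) = I − ∫₀¹ γ'(t) (γ(t) − z)⁻¹ • K(γ(t)) ∘ (H₁ − γ(t))⁻¹ dt`. -/
noncomputable def Wfun (K : ℂ → H →L[ℂ] H) (γ : ℝ → ℂ) (H₁ : H →L[ℂ] H) (z : ℂ) :
    H →L[ℂ] H :=
  1 - ∫ t in (0:ℝ)..1, (derivWithin γ (Set.Icc 0 1) t * (γ t - z)⁻¹) •
    (K (γ t) ∘L Ring.inverse (H₁ - γ t • (1 : H →L[ℂ] H)))

/-- factorization theorem: `M(z) = W(z) ∘ (H₁ − z)` for `z ∉ Γ`. -/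
theorem statement3 (A : H →L[ℂ] H) (hA : IsSelfAdjoint A)
    (γ : ℝ → ℂ) (hγ : ContDiffOn ℝ 1 γ (Set.Icc 0 1))
    (hΓ : ∀ t ∈ Set.Icc (0:ℝ) 1, γ t ∉ spectrum ℂ A)
    (K : ℂ → H →L[ℂ] H) (hK : ContinuousOn (fun t => K (γ t)) (Set.Icc 0 1))
    (hV : curveVar K γ < (curveDist A γ) ^ 2 / 4)
    (X : H →L[ℂ] H) (hXn : ‖X‖ ≤ rMin A K γ)
    (hXσ : Disjoint (spectrum ℂ (A + X)) (γ '' Set.Icc (0:ℝ) 1))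
    (hX : X = Vmap K γ (A + X)) :
    ∀ z : ℂ, z ∉ γ '' Set.Icc (0:ℝ) 1 →
      Mfun A K γ z = Wfun K γ (A + X) z ∘L ((A + X) - z • (1 : H →L[ℂ] H)) := by
  intro z hz
  set H₁ := A + X with hH₁
  have hu : ∀ t ∈ Set.Icc (0:ℝ) 1, IsUnit (H₁ - γ t • (1 : H →L[ℂ] H)) := by
    intro t ht
    have h1 : γ t ∉ spectrum ℂ H₁ := fun h => (hXσ.ne_of_mem h ⟨t, ht, rfl⟩) rfl
    rw [spectrum.notMem_iff] at h1
    have h2 := h1.neg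
    rwa [neg_sub, Algebra.algebraMap_eq_smul_one] at h2
  have hzne : ∀ t ∈ Set.Icc (0:ℝ) 1, γ t - z ≠ 0 := fun t ht h =>
    hz ⟨t, ht, by rwa [sub_eq_zero] at h⟩
  have hcγ : ContinuousOn γ (Set.Icc 0 1) := hγ.continuousOn
  have hcγ' : ContinuousOn (derivWithin γ (Set.Icc 0 1)) (Set.Icc 0 1) :=
    hγ.continuousOn_derivWithin (uniqueDiffOn_Icc one_pos) le_rfl
  have hcR : ContinuousOn (fun t => Ring.inverse (H₁ - γ t • (1:H →L[ℂ] H))) (Set.Icc 0 1) := by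
    intro t ht
    have hcont : ContinuousOn (fun t => H₁ - γ t • (1:H →L[ℂ] H)) (Set.Icc 0 1) :=
      continuousOn_const.sub (hcγ.smul continuousOn_const)
    have h1 : ContinuousAt Ring.inverse (H₁ - γ t • (1:H →L[ℂ] H)) := by
      have := NormedRing.inverse_continuousAt (hu t ht).unit
      rwa [IsUnit.unit_spec] at this
    exact ContinuousAt.comp_continuousWithinAt (g := Ring.inverse) h1 (hcont t ht)
  have hIcc : Set.uIcc (0:ℝ) 1 = Set.Icc 0 1 := Set.uIcc_of_le zero_le_one
  have hcKR : ContinuousOn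
      (fun t => K (γ t) ∘L Ring.inverse (H₁ - γ t • (1:H →L[ℂ] H))) (Set.Icc 0 1) := by
    simp only [← ContinuousLinearMap.mul_def]
    exact hK.mul hcR
  have hcinv : ContinuousOn (fun t => (γ t - z)⁻¹) (Set.Icc 0 1) :=
    (hcγ.sub continuousOn_const).inv₀ hzne
  have hcinv' : ContinuousOn (fun t => (z - γ t)⁻¹) (Set.Icc 0 1) :=
    (continuousOn_const.sub hcγ).inv₀ (fun t ht h => hzne t ht (by
      simp only [Pi.sub_apply] at h; rw [sub_eq_zero] at h ⊢; exact h.symm))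
  set f : ℝ → H →L[ℂ] H := fun t => (derivWithin γ (Set.Icc 0 1) t * (γ t - z)⁻¹) •
    (K (γ t) ∘L Ring.inverse (H₁ - γ t • (1 : H →L[ℂ] H))) with hfdef
  set g : ℝ → H →L[ℂ] H := fun t => (derivWithin γ (Set.Icc 0 1) t * (z - γ t)⁻¹) • K (γ t)
    with hgdef
  set h : ℝ → H →L[ℂ] H := fun t => derivWithin γ (Set.Icc 0 1) t •
    (K (γ t) ∘L Ring.inverse (H₁ - γ t • (1 : H →L[ℂ] H))) with hhdef
  have hfInt : IntervalIntegrable f volume 0 1 :=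
    ContinuousOn.intervalIntegrable (by rw [hIcc]; exact (hcγ'.mul hcinv).smul hcKR)
  have hgInt : IntervalIntegrable g volume 0 1 :=
    ContinuousOn.intervalIntegrable (by rw [hIcc]; exact (hcγ'.mul hcinv').smul hK)
  have hhInt : IntervalIntegrable h volume 0 1 :=
    ContinuousOn.intervalIntegrable (by rw [hIcc]; exact hcγ'.smul hcKR)
  have key : ∀ t ∈ Set.Icc (0:ℝ) 1,
      f t ∘L (H₁ - z • (1 : H →L[ℂ] H)) = -(g t) + h t := by
    intro t ht
    have hRmul : Ring.inverse (H₁ - γ t • (1:H →L[ℂ] H)) * (H₁ - γ t • (1:H →L[ℂ] H)) = 1 :=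
      Ring.inverse_mul_cancel _ (hu t ht)
    have hdecomp : H₁ - z • (1:H →L[ℂ] H) =
        (H₁ - γ t • (1:H →L[ℂ] H)) + (γ t - z) • (1:H →L[ℂ] H) := by
      rw [sub_smul]; abel
    have hsc : (derivWithin γ (Set.Icc 0 1) t * (γ t - z)⁻¹) * (γ t - z) =
        derivWithin γ (Set.Icc 0 1) t := by
      rw [mul_assoc, inv_mul_cancel₀ (hzne t ht), mul_one]
    have hzinv : (z - γ t)⁻¹ = -(γ t - z)⁻¹ := by rw [← neg_sub, inv_neg]
    simp only [hfdef, hgdef, hhdef, ← ContinuousLinearMap.mul_def, hzinv, hdecomp]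
    rw [smul_mul_assoc, mul_add, mul_assoc, hRmul, mul_one, mul_smul_comm, mul_one,
      smul_add, smul_smul, hsc, mul_neg, neg_smul, neg_neg]
  have hS : Wfun K γ H₁ z ∘L (H₁ - z • (1 : H →L[ℂ] H)) =
      (H₁ - z • (1 : H →L[ℂ] H)) - ∫ t in (0:ℝ)..1, f t ∘L (H₁ - z • (1 : H →L[ℂ] H)) := by
    have hone : (1 : H →L[ℂ] H) ∘L (H₁ - z • (1 : H →L[ℂ] H)) = H₁ - z • (1 : H →L[ℂ] H) := by
      ext x; rfl
    rw [Wfun, ContinuousLinearMap.sub_comp, hone]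
    congr 1
    have hcomm := ((ContinuousLinearMap.compL ℂ H H H).flip
      (H₁ - z • (1 : H →L[ℂ] H))).intervalIntegral_comp_comm hfInt
    simp only [ContinuousLinearMap.flip_apply, ContinuousLinearMap.compL_apply] at hcomm
    exact hcomm.symm
  have hsplit : (∫ t in (0:ℝ)..1, f t ∘L (H₁ - z • (1 : H →L[ℂ] H))) =
      -(V1 K γ z) + X := by
    have hgInt' : IntervalIntegrable (fun t => -g t) volume 0 1 := hgInt.neg
    rw [intervalIntegral.integral_congr (g := fun t => -(g t) + h t)
        (fun t ht => key t (hIcc ▸ ht)),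
      intervalIntegral.integral_add hgInt' hhInt, intervalIntegral.integral_neg]
    have hV1 : V1 K γ z = ∫ t in (0:ℝ)..1, g t := rfl
    have hVm : Vmap K γ H₁ = ∫ t in (0:ℝ)..1, h t := rfl
    rw [hV1, hX, hVm]
  rw [hS, hsplit, Mfun, hH₁]
  abel


end
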